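/- Let C be a compact C¹ curve in ℝ^n (n > 2). The set 𝒟_{∂2} of discs (p,u,r) not tangent to C whose boundary sphere ∂D(p,u,r) meets C in at least two points has (2n-1)-dimensional Hausdorff measure zero. -/

import Mathlib

noncomputable section
open Set MeasureTheory Module ENNReal NNReal

namespace Stmt9Aux

abbrev Esp (n : ℕ) := EuclideanSpace ℝ (Fin n)

def sgn (σb : Bool) : ℝ := if σb then 1 else -1

lemma sgn_ne_zero (σb : Bool) : sgn σb ≠ 0 := by cases σb <;> norm_num [sgn]

abbrev Ksub (n : ℕ) (i j : Fin n) := {k : Fin n // k ≠ i ∧ k ≠ j}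

abbrev Dm (n : ℕ) (i j : Fin n) : Type :=
  ℝ × ℝ × (Ksub n i j → ℝ) × (Ksub n i j → ℝ)

variable {n : ℕ}

def wf (γ : ℝ → Esp n) {i j : Fin n} (z : Dm n i j) : Esp n := γ z.1 - γ z.2.1

def c1 (γ : ℝ → Esp n) {i j : Fin n} (z : Dm n i j) : ℝ :=
  -∑ k : Ksub n i j, wf γ z k.1 * z.2.2.1 k

def rho {i j : Fin n} (z : Dm n i j) : ℝ := 1 - ∑ k : Ksub n i j, (z.2.2.1 k) ^ 2

def qf (γ : ℝ → Esp n) {i j : Fin n} (z : Dm n i j) : ℝ :=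
  (wf γ z i) ^ 2 + (wf γ z j) ^ 2

def Df (γ : ℝ → Esp n) {i j : Fin n} (z : Dm n i j) : ℝ :=
  rho z * qf γ z - (c1 γ z) ^ 2

def tf (γ : ℝ → Esp n) (σb : Bool) {i j : Fin n} (z : Dm n i j) : ℝ :=
  sgn σb * Real.sqrt (Df γ z)

def xf (γ : ℝ → Esp n) (σb : Bool) {i j : Fin n} (z : Dm n i j) : ℝ :=
  (c1 γ z * wf γ z i - tf γ σb z * wf γ z j) / qf γ z

def yf (γ : ℝ → Esp n) (σb : Bool) {i j : Fin n} (z : Dm n i j) : ℝ :=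
  (c1 γ z * wf γ z j + tf γ σb z * wf γ z i) / qf γ z

def uf (γ : ℝ → Esp n) (σb : Bool) {i j : Fin n} (z : Dm n i j) : Esp n :=
  xf γ σb z • EuclideanSpace.single i (1:ℝ) + yf γ σb z • EuclideanSpace.single j (1:ℝ)
    + ∑ k : Ksub n i j, z.2.2.1 k • EuclideanSpace.single k.1 (1:ℝ)

def R2 (γ : ℝ → Esp n) {i j : Fin n} (z : Dm n i j) : ℝ :=
  (‖γ z.1‖ ^ 2 - ‖γ z.2.1‖ ^ 2) / 2 - ∑ k : Ksub n i j, wf γ z k.1 * z.2.2.2 k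

def R3 (γ : ℝ → Esp n) (σb : Bool) {i j : Fin n} (z : Dm n i j) : ℝ :=
  (inner ℝ (γ z.1) (uf γ σb z) : ℝ) - ∑ k : Ksub n i j, z.2.2.1 k * z.2.2.2 k

def Pf (γ : ℝ → Esp n) (σb : Bool) {i j : Fin n} (z : Dm n i j) : ℝ :=
  (R2 γ z * yf γ σb z - wf γ z j * R3 γ σb z) / tf γ σb z

def Qf (γ : ℝ → Esp n) (σb : Bool) {i j : Fin n} (z : Dm n i j) : ℝ :=
  (wf γ z i * R3 γ σb z - R2 γ z * xf γ σb z) / tf γ σb z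

def pf (γ : ℝ → Esp n) (σb : Bool) {i j : Fin n} (z : Dm n i j) : Esp n :=
  Pf γ σb z • EuclideanSpace.single i (1:ℝ) + Qf γ σb z • EuclideanSpace.single j (1:ℝ)
    + ∑ k : Ksub n i j, z.2.2.2 k • EuclideanSpace.single k.1 (1:ℝ)

def ch (γ : ℝ → Esp n) (σb : Bool) {i j : Fin n} (z : Dm n i j) : Esp n × Esp n × ℝ :=
  (pf γ σb z, uf γ σb z, ‖γ z.1 - pf γ σb z‖)

def Om (γ : ℝ → Esp n) (σb : Bool) (i j : Fin n) : Set (Dm n i j) :=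
  {z | 0 < qf γ z ∧ 0 < Df γ z ∧ γ z.1 - pf γ σb z ≠ 0}

section Smooth

variable {n : ℕ} {γ : ℝ → Esp n} {i j : Fin n} {σb : Bool}

lemma cd_coord (k : Fin n) : ContDiff ℝ 1 (fun v : Esp n => v k) :=
  (EuclideanSpace.proj (𝕜 := ℝ) k).contDiff

lemma cd_s1 : ContDiff ℝ 1 (fun z : Dm n i j => z.1) := contDiff_fst
lemma cd_s2 : ContDiff ℝ 1 (fun z : Dm n i j => z.2.1) := contDiff_fst.comp contDiff_snd
lemma cd_uhat (k : Ksub n i j) : ContDiff ℝ 1 (fun z : Dm n i j => z.2.2.1 k) :=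
  (contDiff_apply ℝ ℝ k).comp (contDiff_fst.comp (contDiff_snd.comp contDiff_snd))
lemma cd_phat (k : Ksub n i j) : ContDiff ℝ 1 (fun z : Dm n i j => z.2.2.2 k) :=
  (contDiff_apply ℝ ℝ k).comp (contDiff_snd.comp (contDiff_snd.comp contDiff_snd))

variable (hγ : ContDiff ℝ 1 γ)
include hγ

lemma cd_wf : ContDiff ℝ 1 (wf γ (i := i) (j := j)) :=
  (hγ.comp cd_s1).sub (hγ.comp cd_s2)

lemma cd_wk (k : Fin n) : ContDiff ℝ 1 (fun z : Dm n i j => wf γ z k) :=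
  (cd_coord k).comp (cd_wf hγ)

lemma cd_c1 : ContDiff ℝ 1 (c1 γ (i := i) (j := j)) :=
  (ContDiff.sum fun k _ => (cd_wk hγ k.1).mul (cd_uhat k)).neg

lemma cd_qf : ContDiff ℝ 1 (qf γ (i := i) (j := j)) :=
  ((cd_wk hγ i).pow 2).add ((cd_wk hγ j).pow 2)

lemma cd_Df : ContDiff ℝ 1 (Df γ (i := i) (j := j)) := by
  have : ContDiff ℝ 1 (rho (i := i) (j := j)) :=
    contDiff_const.sub (ContDiff.sum fun k _ => (cd_uhat k).pow 2)
  exact (this.mul (cd_qf hγ)).sub ((cd_c1 hγ).pow 2)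

lemma cd_R2 : ContDiff ℝ 1 (R2 γ (i := i) (j := j)) := by
  have h1 : ContDiff ℝ 1 (fun z : Dm n i j => ‖γ z.1‖ ^ 2) :=
    (contDiff_norm_sq ℝ).comp (hγ.comp cd_s1)
  have h2 : ContDiff ℝ 1 (fun z : Dm n i j => ‖γ z.2.1‖ ^ 2) :=
    (contDiff_norm_sq ℝ).comp (hγ.comp cd_s2)
  exact ((h1.sub h2).div_const 2).sub
    (ContDiff.sum fun k _ => (cd_wk hγ k.1).mul (cd_phat k))

variable {z : Dm n i j} (hz : z ∈ Om γ σb i j)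
include hz

lemma cdA_tf : ContDiffAt ℝ 1 (tf γ σb (i := i) (j := j)) z :=
  contDiffAt_const.mul ((cd_Df hγ).contDiffAt.sqrt hz.2.1.ne')

lemma cdA_xf : ContDiffAt ℝ 1 (xf γ σb (i := i) (j := j)) z :=
  ContDiffAt.div
    (((cd_c1 hγ).contDiffAt.mul (cd_wk hγ i).contDiffAt).sub
      ((cdA_tf hγ hz).mul (cd_wk hγ j).contDiffAt))
    (cd_qf hγ).contDiffAt hz.1.ne'

lemma cdA_yf : ContDiffAt ℝ 1 (yf γ σb (i := i) (j := j)) z :=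
  ContDiffAt.div
    (((cd_c1 hγ).contDiffAt.mul (cd_wk hγ j).contDiffAt).add
      ((cdA_tf hγ hz).mul (cd_wk hγ i).contDiffAt))
    (cd_qf hγ).contDiffAt hz.1.ne'

lemma cdA_uf : ContDiffAt ℝ 1 (uf γ σb (i := i) (j := j)) z :=
  (((cdA_xf hγ hz).smul contDiffAt_const).add
    ((cdA_yf hγ hz).smul contDiffAt_const)).add
    (ContDiff.contDiffAt (ContDiff.sum fun k _ => (cd_uhat k).smul contDiff_const))

lemma cdA_R3 : ContDiffAt ℝ 1 (R3 γ σb (i := i) (j := j)) z :=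
  ((hγ.comp cd_s1).contDiffAt.inner ℝ (cdA_uf hγ hz)).sub
    (ContDiff.contDiffAt (ContDiff.sum fun k _ => (cd_uhat k).mul (cd_phat k)))


omit hγ in lemma cdA_tf_ne : tf γ σb z ≠ 0 := by
  have := Real.sqrt_pos.2 hz.2.1
  exact mul_ne_zero (sgn_ne_zero σb) this.ne'

lemma cdA_Pf : ContDiffAt ℝ 1 (Pf γ σb (i := i) (j := j)) z :=
  ContDiffAt.div
    (((cd_R2 hγ).contDiffAt.mul (cdA_yf hγ hz)).sub
      ((cd_wk hγ j).contDiffAt.mul (cdA_R3 hγ hz)))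
    (cdA_tf hγ hz) (cdA_tf_ne hz)

lemma cdA_Qf : ContDiffAt ℝ 1 (Qf γ σb (i := i) (j := j)) z :=
  ContDiffAt.div
    (((cd_wk hγ i).contDiffAt.mul (cdA_R3 hγ hz)).sub
      ((cd_R2 hγ).contDiffAt.mul (cdA_xf hγ hz)))
    (cdA_tf hγ hz) (cdA_tf_ne hz)

lemma cdA_pf : ContDiffAt ℝ 1 (pf γ σb (i := i) (j := j)) z :=
  (((cdA_Pf hγ hz).smul contDiffAt_const).add
    ((cdA_Qf hγ hz).smul contDiffAt_const)).add
    (ContDiff.contDiffAt (ContDiff.sum fun k _ => (cd_phat k).smul contDiff_const))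

lemma cdA_ch : ContDiffAt ℝ 1 (ch γ σb (i := i) (j := j)) z := by
  refine (cdA_pf hγ hz).prodMk ((cdA_uf hγ hz).prodMk ?_)
  exact ContDiffAt.norm ℝ (((hγ.comp cd_s1).contDiffAt).sub (cdA_pf hγ hz)) hz.2.2

end Smooth


section Cover

variable {n : ℕ} {γ : ℝ → Esp n} {i j : Fin n} {σb : Bool}

lemma sum_apply' {α : Type*} (s : Finset α) (f : α → Esp n) (k : Fin n) :
    (∑ a ∈ s, f a) k = ∑ a ∈ s, f a k := by
  classical
  induction s using Finset.induction with
  | empty => simp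
  | insert a s h ih => rw [Finset.sum_insert h, Finset.sum_insert h, PiLp.add_apply, ih]

lemma asm_apply_i (hij : i ≠ j) (A B : ℝ) (g : Ksub n i j → ℝ) :
    (A • EuclideanSpace.single i (1:ℝ) + B • EuclideanSpace.single j (1:ℝ)
      + ∑ k : Ksub n i j, g k • EuclideanSpace.single k.1 (1:ℝ)) i = A := by
  rw [PiLp.add_apply, PiLp.add_apply, sum_apply']
  rw [Finset.sum_eq_zero (fun k _ => by
    rw [PiLp.smul_apply, EuclideanSpace.single_apply, if_neg (Ne.symm k.2.1), smul_zero])]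
  simp [EuclideanSpace.single_apply, hij]

lemma asm_apply_j (hij : i ≠ j) (A B : ℝ) (g : Ksub n i j → ℝ) :
    (A • EuclideanSpace.single i (1:ℝ) + B • EuclideanSpace.single j (1:ℝ)
      + ∑ k : Ksub n i j, g k • EuclideanSpace.single k.1 (1:ℝ)) j = B := by
  rw [PiLp.add_apply, PiLp.add_apply, sum_apply']
  rw [Finset.sum_eq_zero (fun k _ => by
    rw [PiLp.smul_apply, EuclideanSpace.single_apply, if_neg (Ne.symm k.2.2), smul_zero])]
  simp [EuclideanSpace.single_apply, Ne.symm hij]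

lemma asm_apply_k (A B : ℝ) (g : Ksub n i j → ℝ) (k : Ksub n i j) :
    (A • EuclideanSpace.single i (1:ℝ) + B • EuclideanSpace.single j (1:ℝ)
      + ∑ k' : Ksub n i j, g k' • EuclideanSpace.single k'.1 (1:ℝ)) k.1 = g k := by
  rw [PiLp.add_apply, PiLp.add_apply, sum_apply']
  rw [Finset.sum_eq_single k (fun k' _ hk' => by
      rw [PiLp.smul_apply, EuclideanSpace.single_apply,
        if_neg (fun h => hk' (Subtype.ext h.symm)), smul_zero])
    (fun h => absurd (Finset.mem_univ k) h)]
  simp [EuclideanSpace.single_apply, k.2.1, k.2.2]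

lemma ksum (hij : i ≠ j) (g : Fin n → ℝ) :
    ∑ k : Fin n, g k = g i + g j + ∑ k : Ksub n i j, g k.1 := by
  classical
  have h1 : ∑ k ∈ ((Finset.univ : Finset (Fin n)) \ {i, j}), g k
      = ∑ k : Ksub n i j, g k.1 :=
    Finset.sum_subtype _ (fun k => by simp [not_or]) g
  have h2 := Finset.sum_sdiff_eq_sub (f := g)
    (Finset.subset_univ ({i, j} : Finset (Fin n)))
  rw [← h1, h2, Finset.sum_pair hij]
  ring

lemma inner_coords (x y : Esp n) : (inner ℝ x y : ℝ) = ∑ k : Fin n, x k * y k := by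
  simp [PiLp.inner_apply, RCLike.inner_apply, conj_trivial, mul_comm]

lemma exists_coord_ne {w u : Esp n} (hw : w ≠ 0) (hu : ‖u‖ = 1)
    (hwu : (inner ℝ w u : ℝ) = 0) : ∃ i j : Fin n, w i * u j - w j * u i ≠ 0 := by
  by_contra h
  push_neg at h
  obtain ⟨i₀, hi₀⟩ : ∃ k, w k ≠ 0 := by
    by_contra h0
    push_neg at h0
    exact hw (by ext k; simpa using h0 k)
  have huk : u = (u i₀ / w i₀) • w := by
    ext k
    have hk := sub_eq_zero.1 (h i₀ k)
    rw [PiLp.smul_apply, smul_eq_mul]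
    field_simp
    linarith
  rw [huk, real_inner_smul_right] at hwu
  rcases mul_eq_zero.1 hwu with h' | h'
  · have hu0 : u i₀ = 0 := by
      rcases div_eq_zero_iff.1 h' with h'' | h''
      · exact h''
      · exact absurd h'' hi₀
    have : u = 0 := by rw [huk, hu0, zero_div, zero_smul]
    rw [this, norm_zero] at hu
    norm_num at hu
  · exact (inner_self_ne_zero.2 hw) h'

set_option maxHeartbeats 2000000 in
lemma cover {p u : Esp n} {r : ℝ} (hu : ‖u‖ = 1) (hr : 0 < r)
    {s₁ s₂ : ℝ} (hne : γ s₁ ≠ γ s₂)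
    (h1 : (inner ℝ (γ s₁ - p) u : ℝ) = 0) (h1r : ‖γ s₁ - p‖ = r)
    (h2 : (inner ℝ (γ s₂ - p) u : ℝ) = 0) (h2r : ‖γ s₂ - p‖ = r) :
    ∃ i j : Fin n, i ≠ j ∧ ∃ σb : Bool, ∃ z ∈ Om γ σb i j,
      ch γ σb z = (p, u, r) := by
  classical
  have hw0 : (γ s₁ - γ s₂ : Esp n) ≠ 0 := sub_ne_zero.2 hne
  have hwu : (inner ℝ (γ s₁ - γ s₂) u : ℝ) = 0 := by
    have he : (γ s₁ - γ s₂ : Esp n) = (γ s₁ - p) - (γ s₂ - p) := by abel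
    rw [he, inner_sub_left, h1, h2]
    ring
  obtain ⟨i, j, hd⟩ := exists_coord_ne hw0 hu hwu
  set a := γ s₁ with ha
  set b := γ s₂ with hb
  set w : Esp n := a - b with hwdef
  set d := w i * u j - w j * u i with hddef
  have hij : i ≠ j := by
    rintro rfl
    rw [hddef] at hd
    apply hd
    ring
  set σb : Bool := decide (0 < d) with hσdef
  set z : Dm n i j := (s₁, s₂, fun k => u k.1, fun k => p k.1) with hzdef
  have hwfz : wf γ z = w := rfl
  -- scalar sums
  have hwusum : ∑ k : Fin n, w k * u k = 0 := by
    rw [← inner_coords]; exact hwu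
  have husum : ∑ k : Fin n, u k * u k = 1 := by
    have h := real_inner_self_eq_norm_sq u
    rw [inner_coords] at h
    rw [h, hu]; norm_num
  have hc1 : c1 γ z = w i * u i + w j * u j := by
    have h := ksum hij (fun k => w k * u k)
    rw [hwusum] at h
    simp only [c1, hwfz]
    have hz1 : ∑ k : Ksub n i j, w k.1 * z.2.2.1 k = ∑ k : Ksub n i j, w k.1 * u k.1 := rfl
    rw [hz1]
    linarith
  have hrho : rho z = u i * u i + u j * u j := by
    have h := ksum hij (fun k => u k * u k)
    rw [husum] at h
    simp only [rho]
    have hz1 : ∑ k : Ksub n i j, (z.2.2.1 k) ^ 2 = ∑ k : Ksub n i j, u k.1 * u k.1 := by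
      exact Finset.sum_congr rfl (fun k _ => sq (u k.1))
    rw [hz1]
    linarith
  have hqf : qf γ z = w i ^ 2 + w j ^ 2 := by
    simp only [qf, hwfz]
  have hDf : Df γ z = d ^ 2 := by
    simp only [Df, hrho, hqf, hc1, hddef]
    ring
  have hq0 : 0 < qf γ z := by
    rw [hqf]
    rcases (add_nonneg (sq_nonneg (w i)) (sq_nonneg (w j))).lt_or_eq with h | h
    · exact h
    · exfalso
      have hwi : w i = 0 := by nlinarith [sq_nonneg (w i), sq_nonneg (w j)]
      have hwj : w j = 0 := by nlinarith [sq_nonneg (w i), sq_nonneg (w j)]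
      apply hd
      rw [hddef, hwi, hwj]; ring
  have hD0 : 0 < Df γ z := by
    rw [hDf]
    exact lt_of_le_of_ne (sq_nonneg d) (Ne.symm (pow_ne_zero 2 hd))
  have htf : tf γ σb z = d := by
    simp only [tf, hDf, Real.sqrt_sq_eq_abs]
    rcases lt_or_gt_of_ne hd with hneg | hpos
    · have hσ : σb = false := by simp [hσdef, not_lt.2 hneg.le]
      rw [hσ]
      simp [sgn, abs_of_neg hneg]
    · have hσ : σb = true := by simp [hσdef, hpos]
      rw [hσ]
      simp [sgn, abs_of_pos hpos]
  have hqne : qf γ z ≠ 0 := hq0.ne'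
  have hxf : xf γ σb z = u i := by
    rw [xf, hc1, htf, hwfz]
    rw [div_eq_iff hqne, hqf, hddef]
    ring
  have hyf : yf γ σb z = u j := by
    rw [yf, hc1, htf, hwfz]
    rw [div_eq_iff hqne, hqf, hddef]
    ring
  have hufu : uf γ σb z = u := by
    ext k
    by_cases hki : k = i
    · subst hki
      rw [uf, asm_apply_i hij, hxf]
    · by_cases hkj : k = j
      · subst hkj
        rw [uf, asm_apply_j hij, hyf]
      · exact asm_apply_k _ _ _ ⟨k, hki, hkj⟩
  -- bisector
  have hnorm : ‖a - p‖ ^ 2 = ‖b - p‖ ^ 2 := by rw [h1r, h2r]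
  have hbis : (inner ℝ w p : ℝ) = (‖a‖ ^ 2 - ‖b‖ ^ 2) / 2 := by
    rw [norm_sub_sq_real, norm_sub_sq_real] at hnorm
    rw [hwdef, inner_sub_left]
    have hca : (inner ℝ a p : ℝ) = (inner ℝ p a : ℝ) := real_inner_comm _ _
    have hcb : (inner ℝ b p : ℝ) = (inner ℝ p b : ℝ) := real_inner_comm _ _
    linarith [hnorm, hca, hcb]
  have hwp : ∑ k : Fin n, w k * p k = (‖a‖ ^ 2 - ‖b‖ ^ 2) / 2 := by
    rw [← inner_coords]; exact hbis
  have hR2 : R2 γ z = w i * p i + w j * p j := by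
    have h := ksum hij (fun k => w k * p k)
    rw [hwp] at h
    simp only [R2, hwfz]
    have hz1 : ∑ k : Ksub n i j, w k.1 * z.2.2.2 k = ∑ k : Ksub n i j, w k.1 * p k.1 := rfl
    rw [hz1]
    have : (‖γ s₁‖ ^ 2 - ‖γ s₂‖ ^ 2) = (‖a‖ ^ 2 - ‖b‖ ^ 2) := by rw [← ha, ← hb]
    rw [this]
    linarith
  have hup : ∑ k : Fin n, u k * p k = (inner ℝ a u : ℝ) := by
    have h := h1
    rw [inner_sub_left] at h
    have hpu : (inner ℝ p u : ℝ) = ∑ k : Fin n, u k * p k := by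
      rw [inner_coords]
      exact Finset.sum_congr rfl (fun k _ => mul_comm _ _)
    linarith [hpu, h]
  have hR3 : R3 γ σb z = u i * p i + u j * p j := by
    have h := ksum hij (fun k => u k * p k)
    rw [hup] at h
    simp only [R3, hufu]
    have hz1 : ∑ k : Ksub n i j, z.2.2.1 k * z.2.2.2 k
        = ∑ k : Ksub n i j, u k.1 * p k.1 := rfl
    rw [hz1]
    have hga : γ z.1 = a := rfl
    rw [hga]
    linarith
  have htfne : tf γ σb z ≠ 0 := by rw [htf]; exact hd
  have hPf : Pf γ σb z = p i := by
    rw [Pf, hR2, hR3, hyf, htf, hwfz, div_eq_iff hd, hddef]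
    ring
  have hQf : Qf γ σb z = p j := by
    rw [Qf, hR2, hR3, hxf, htf, hwfz, div_eq_iff hd, hddef]
    ring
  have hpfp : pf γ σb z = p := by
    ext k
    by_cases hki : k = i
    · subst hki
      rw [pf, asm_apply_i hij, hPf]
    · by_cases hkj : k = j
      · subst hkj
        rw [pf, asm_apply_j hij, hQf]
      · exact asm_apply_k _ _ _ ⟨k, hki, hkj⟩
  have hap : γ z.1 - pf γ σb z ≠ 0 := by
    rw [hpfp]
    have hga : γ z.1 = a := rfl
    rw [hga]
    intro h0
    rw [sub_eq_zero] at h0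
    rw [h0, sub_self, norm_zero] at h1r
    exact hr.ne h1r
  refine ⟨i, j, hij, σb, z, ⟨hq0, hD0, hap⟩, ?_⟩
  rw [ch, hpfp, hufu]
  have hga : γ z.1 = a := rfl
  rw [hga, h1r]

end Cover

section Main

variable {n : ℕ} {γ : ℝ → Esp n}

lemma card_Ksub {i j : Fin n} (hij : i ≠ j) : Fintype.card (Ksub n i j) = n - 2 := by
  classical
  rw [Fintype.card_subtype]
  have h : (Finset.univ.filter fun k : Fin n => k ≠ i ∧ k ≠ j)
      = Finset.univ \ {i, j} := by
    ext k; simp [not_or]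
  rw [h, Finset.card_sdiff_of_subset (Finset.subset_univ _), Finset.card_univ, Fintype.card_fin]
  congr 1
  rw [Finset.card_insert_of_notMem (by simp [hij]), Finset.card_singleton]

lemma dimH_Dm {i j : Fin n} (hij : i ≠ j) :
    dimH (Set.univ : Set (Dm n i j)) = ((2 + 2 * (n - 2) : ℕ) : ℝ≥0∞) := by
  rw [Real.dimH_univ_eq_finrank]
  congr 1
  rw [Module.finrank_prod, Module.finrank_prod, Module.finrank_prod,
    Module.finrank_self, Module.finrank_fintype_fun_eq_card, card_Ksub hij]
  omega

lemma dimH_chart (hγ : ContDiff ℝ 1 γ) {i j : Fin n} (hij : i ≠ j) (σb : Bool) :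
    dimH (ch γ σb '' Om γ σb i j) ≤ ((2 + 2 * (n - 2) : ℕ) : ℝ≥0∞) := by
  refine le_trans (dimH_image_le_of_locally_lipschitzOn fun z hz => ?_) ?_
  · obtain ⟨K, t, ht, hl⟩ := (cdA_ch hγ hz).exists_lipschitzOnWith
    exact ⟨K, t, nhdsWithin_le_nhds ht, hl⟩
  · rw [← dimH_Dm hij]
    exact dimH_mono (subset_univ _)

end Main

end Stmt9Aux

open MeasureTheory

theorem stmt9 (n : ℕ) (hn : 2 < n)
    (γ : ℝ → EuclideanSpace ℝ (Fin n))
    (hγ : ContDiff ℝ 1 γ)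
    (hinj : Set.InjOn γ (Set.Icc 0 1))
    (hreg : ∀ s ∈ Set.Icc (0 : ℝ) 1, deriv γ s ≠ 0) :
    μH[2 * (n : ℝ) - 1]
      {x : EuclideanSpace ℝ (Fin n) × EuclideanSpace ℝ (Fin n) × ℝ |
        ‖x.2.1‖ = 1 ∧ 0 < x.2.2 ∧
        -- the disc is not tangent to the curve
        ¬ (∃ s ∈ Set.Icc (0 : ℝ) 1,
            (inner ℝ (γ s - x.1) x.2.1 : ℝ) = 0 ∧ ‖γ s - x.1‖ ≤ x.2.2 ∧
            (inner ℝ (deriv γ s) x.2.1 : ℝ) = 0) ∧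
        -- the boundary sphere of the disc meets the curve in at least two points
        ∃ s₁ ∈ Set.Icc (0 : ℝ) 1, ∃ s₂ ∈ Set.Icc (0 : ℝ) 1,
          γ s₁ ≠ γ s₂ ∧
          (inner ℝ (γ s₁ - x.1) x.2.1 : ℝ) = 0 ∧ ‖γ s₁ - x.1‖ = x.2.2 ∧
          (inner ℝ (γ s₂ - x.1) x.2.1 : ℝ) = 0 ∧ ‖γ s₂ - x.1‖ = x.2.2} = 0 := by
  classical
  set U : Set (EuclideanSpace ℝ (Fin n) × EuclideanSpace ℝ (Fin n) × ℝ) :=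
    ⋃ (i : Fin n), ⋃ (j : Fin n), ⋃ (_ : i ≠ j), ⋃ (σb : Bool),
      Stmt9Aux.ch γ σb '' Stmt9Aux.Om γ σb i j with hU
  have hsub : {x : EuclideanSpace ℝ (Fin n) × EuclideanSpace ℝ (Fin n) × ℝ |
        ‖x.2.1‖ = 1 ∧ 0 < x.2.2 ∧
        ¬ (∃ s ∈ Set.Icc (0 : ℝ) 1,
            (inner ℝ (γ s - x.1) x.2.1 : ℝ) = 0 ∧ ‖γ s - x.1‖ ≤ x.2.2 ∧
            (inner ℝ (deriv γ s) x.2.1 : ℝ) = 0) ∧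
        ∃ s₁ ∈ Set.Icc (0 : ℝ) 1, ∃ s₂ ∈ Set.Icc (0 : ℝ) 1,
          γ s₁ ≠ γ s₂ ∧
          (inner ℝ (γ s₁ - x.1) x.2.1 : ℝ) = 0 ∧ ‖γ s₁ - x.1‖ = x.2.2 ∧
          (inner ℝ (γ s₂ - x.1) x.2.1 : ℝ) = 0 ∧ ‖γ s₂ - x.1‖ = x.2.2} ⊆ U := by
    rintro ⟨p, u, r⟩ ⟨hu, hr, -, s₁, -, s₂, -, hne, h1, h1r, h2, h2r⟩
    obtain ⟨i, j, hij, σb, z, hzΩ, hch⟩ :=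
      Stmt9Aux.cover hu hr hne h1 h1r h2 h2r
    exact Set.mem_iUnion.2 ⟨i, Set.mem_iUnion.2 ⟨j, Set.mem_iUnion.2 ⟨hij,
      Set.mem_iUnion.2 ⟨σb, ⟨z, hzΩ, hch⟩⟩⟩⟩⟩
  refine measure_mono_null hsub ?_
  have hdim : dimH U ≤ ((2 + 2 * (n - 2) : ℕ) : ENNReal) := by
    rw [hU]
    simp only [dimH_iUnion]
    exact iSup_le fun i => iSup_le fun j => iSup_le fun hij => iSup_le fun σb =>
      Stmt9Aux.dimH_chart hγ hij σb
  have hlt : dimH U < (((2 * n - 1 : ℕ) : NNReal) : ENNReal) := by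
    refine lt_of_le_of_lt hdim ?_
    norm_cast
    omega
  have h0 := hausdorffMeasure_of_dimH_lt hlt
  have hexp : 2 * (n : ℝ) - 1 = (((2 * n - 1 : ℕ) : NNReal) : ℝ) := by
    rw [NNReal.coe_natCast, Nat.cast_sub (by omega : 1 ≤ 2 * n)]
    push_cast
    ring
  rw [hexp]
  exact h0
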